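/- arXiv:1412.0913 — 5 statements merged into one kernel-verified Lean document; each statement's English description precedes it below -/
import Mathlib

section
/- Let V be a finite-dimensional real inner product space, A : V → V a self-adjoint positive semidefinite linear operator, Λ > 0 with ⟨A v, v⟩ ≤ Λ ⟨v, v⟩ for all v ∈ V, and G = id − Λ⁻¹ A. Suppose Q : V → V is a linear operator satisfying the approximation property ‖v − Q v‖ ≤ C_A ‖A v‖ for all v ∈ V, for some constant C_A > 0. For m₁, m₂ ∈ ℕ let E = G^{m₂} ∘ (id − Q) ∘ G^{m₁} be the two-level error propagation operator with m₁ pre- and m₂ post-smoothing steps. Then for every v ∈ V, ⟨A (E v), E v⟩ ≤ C_A² Λ² (1 + 2 m₁)⁻¹ (1 + 2 m₂)⁻¹ ⟨A v, v⟩; in particular, the energy-norm error reduction factor of the two-level method is at most C_A Λ ((1 + 2 m₁)(1 + 2 m₂))^{−1/2}. -/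
open scoped RealInnerProductSpace

lemma two_level_aux_pow (t : ℝ) (h0 : 0 ≤ t) (h1 : t ≤ 1) (k : ℕ) :
    (k + 1 : ℝ) * (t * (1 - t) ^ k) ≤ 1 := by
  have h1t : (0:ℝ) ≤ 1 - t := by linarith
  have hp : ∀ j : ℕ, (1 - t) ^ j * (1 + j * t) ≤ 1 := by
    intro j
    induction j with
    | zero => simp
    | succ j ih =>
      have key : (1 - t) * (1 + ((j:ℝ) + 1) * t) ≤ 1 + j * t := by nlinarith [sq_nonneg t]
      calc (1 - t) ^ (j + 1) * (1 + (↑(j + 1) : ℝ) * t)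
          = (1 - t) ^ j * ((1 - t) * (1 + ((j:ℝ) + 1) * t)) := by push_cast; ring
        _ ≤ (1 - t) ^ j * (1 + j * t) :=
            mul_le_mul_of_nonneg_left key (pow_nonneg h1t j)
        _ ≤ 1 := ih
  nlinarith [hp k, pow_nonneg h1t k, mul_nonneg (sub_nonneg.2 h1) (pow_nonneg h1t k)]

/-- Two-level convergence: let `A` be a self-adjoint positive semidefinite operator on a
finite-dimensional real inner product space, `Λ > 0` with `⟪A v, v⟫ ≤ Λ ⟪v, v⟫` for all `v`,
`G = id - Λ⁻¹ • A`, and let `Q` satisfy the approximation property `‖v - Q v‖ ≤ C_A ‖A v‖`.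
Then the two-level error propagation operator `E = G^m₂ ∘ (id - Q) ∘ G^m₁` satisfies
`⟪A (E v), E v⟫ ≤ C_A² Λ² (1 + 2m₁)⁻¹ (1 + 2m₂)⁻¹ ⟪A v, v⟫` for every `v`. -/
theorem two_level_energy_contraction
    {V : Type*} [NormedAddCommGroup V] [InnerProductSpace ℝ V] [FiniteDimensional ℝ V]
    (A : V →ₗ[ℝ] V) (hA : LinearMap.IsSymmetric A)
    (hA_pos : ∀ v : V, 0 ≤ ⟪A v, v⟫)
    (Λ : ℝ) (hΛ : 0 < Λ) (hΛ_ub : ∀ v : V, ⟪A v, v⟫ ≤ Λ * ⟪v, v⟫)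
    (G : V →ₗ[ℝ] V) (hG : G = LinearMap.id - Λ⁻¹ • A)
    (Q : V →ₗ[ℝ] V) (C_A : ℝ) (hC_A : 0 < C_A)
    (happrox : ∀ v : V, ‖v - Q v‖ ≤ C_A * ‖A v‖)
    (m₁ m₂ : ℕ)
    (E : V →ₗ[ℝ] V) (hE : E = (G ^ m₂) ∘ₗ (LinearMap.id - Q) ∘ₗ (G ^ m₁))
    (v : V) :
    ⟪A (E v), E v⟫ ≤
      C_A ^ 2 * Λ ^ 2 * (1 + 2 * (m₁ : ℝ))⁻¹ * (1 + 2 * (m₂ : ℝ))⁻¹ * ⟪A v, v⟫ := by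
  classical
  have hrank : Module.finrank ℝ V = Module.finrank ℝ V := rfl
  set n := Module.finrank ℝ V
  let b : OrthonormalBasis (Fin n) ℝ V := hA.eigenvectorBasis hrank
  let μ : Fin n → ℝ := hA.eigenvalues hrank
  -- coordinates
  let r : V → Fin n → ℝ := fun x i => b.repr x i
  have hrA : ∀ (x : V) (i : Fin n), r (A x) i = μ i * r x i := fun x i =>
    hA.eigenvectorBasis_apply_self_apply hrank x i
  -- inner product as sum of coordinates
  have hinner : ∀ x y : V, ⟪x, y⟫ = ∑ i, r x i * r y i := by
    intro x y
    rw [← b.repr.inner_map_map x y, PiLp.inner_apply]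
    simp [r, mul_comm]
  -- eigenvalue bounds
  have hb1 : ∀ i, ‖b i‖ = 1 := fun i => b.orthonormal.1 i
  have hμ0 : ∀ i, 0 ≤ μ i := by
    intro i
    have h := hA_pos (b i)
    rw [hA.apply_eigenvectorBasis hrank i, real_inner_smul_left,
      real_inner_self_eq_norm_sq, hb1 i] at h
    simpa using h
  have hμΛ : ∀ i, μ i ≤ Λ := by
    intro i
    have h := hΛ_ub (b i)
    rw [hA.apply_eigenvectorBasis hrank i, real_inner_smul_left,
      real_inner_self_eq_norm_sq, hb1 i] at h
    simpa using h
  -- coordinates of G-powers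
  have hrG : ∀ (m : ℕ) (x : V) (i : Fin n),
      r ((G ^ m) x) i = (1 - μ i / Λ) ^ m * r x i := by
    intro m
    induction m with
    | zero => intro x i; simp
    | succ m ih =>
      intro x i
      have : (G ^ (m + 1)) x = (G ^ m) (G x) := by
        rw [pow_succ, Module.End.mul_apply]
      rw [this, ih]
      have hGx : r (G x) i = (1 - μ i / Λ) * r x i := by
        rw [hG]
        simp only [LinearMap.sub_apply, LinearMap.id_apply, LinearMap.smul_apply]
        have : r (x - Λ⁻¹ • A x) i = r x i - Λ⁻¹ * r (A x) i := by
          simp [r, map_sub, map_smul]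
        rw [this, hrA]
        field_simp
      rw [hGx]; ring
  -- key scalar bound
  have hkey : ∀ (i : Fin n) (m : ℕ),
      μ i * (1 - μ i / Λ) ^ (2 * m) ≤ Λ * (1 + 2 * (m : ℝ))⁻¹ := by
    intro i m
    have ht0 : 0 ≤ μ i / Λ := div_nonneg (hμ0 i) hΛ.le
    have ht1 : μ i / Λ ≤ 1 := (div_le_one hΛ).2 (hμΛ i)
    have h := two_level_aux_pow (μ i / Λ) ht0 ht1 (2 * m)
    push_cast at h
    have hden : (0:ℝ) < 1 + 2 * (m : ℝ) := by positivity
    have hΛ0 : Λ ≠ 0 := ne_of_gt hΛ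
    rw [← div_eq_mul_inv, le_div_iff₀ hden]
    calc μ i * (1 - μ i / Λ) ^ (2 * m) * (1 + 2 * (m : ℝ))
        = Λ * ((2 * (m : ℝ) + 1) * (μ i / Λ * (1 - μ i / Λ) ^ (2 * m))) := by
          field_simp; ring
      _ ≤ Λ * 1 := mul_le_mul_of_nonneg_left h hΛ.le
      _ = Λ := mul_one Λ
  -- abbreviations
  set u : V := (G ^ m₁) v with hu
  set w : V := u - Q u with hw
  have hEv : E v = (G ^ m₂) w := by
    rw [hE]
    simp [hw, hu, LinearMap.comp_apply, LinearMap.sub_apply]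
  -- Step 1: post-smoothing
  have step1 : ⟪A (E v), E v⟫ ≤ Λ * (1 + 2 * (m₂ : ℝ))⁻¹ * ‖w‖ ^ 2 := by
    rw [hEv, hinner]
    have : ∀ i, r (A ((G ^ m₂) w)) i * r ((G ^ m₂) w) i
        = μ i * (1 - μ i / Λ) ^ (2 * m₂) * (r w i) ^ 2 := by
      intro i; rw [hrA, hrG]; ring
    rw [Finset.sum_congr rfl fun i _ => this i]
    have hnorm : ‖w‖ ^ 2 = ∑ i, (r w i) ^ 2 := by
      rw [← real_inner_self_eq_norm_sq, hinner]
      exact Finset.sum_congr rfl fun i _ => (sq (r w i)).symm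
    rw [hnorm, Finset.mul_sum]
    apply Finset.sum_le_sum
    intro i _
    exact mul_le_mul_of_nonneg_right (hkey i m₂) (sq_nonneg _)
  -- Step 2: approximation property
  have step2 : ‖w‖ ^ 2 ≤ C_A ^ 2 * ‖A u‖ ^ 2 := by
    have h := happrox u
    rw [← hw] at h
    have hn0 : 0 ≤ ‖w‖ := norm_nonneg _
    nlinarith [norm_nonneg (A u)]
  -- Step 3: pre-smoothing
  have step3 : ‖A u‖ ^ 2 ≤ Λ * (1 + 2 * (m₁ : ℝ))⁻¹ * ⟪A v, v⟫ := by
    have hnorm : ‖A u‖ ^ 2 = ∑ i, (μ i) ^ 2 * (1 - μ i / Λ) ^ (2 * m₁) * (r v i) ^ 2 := by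
      rw [← real_inner_self_eq_norm_sq, hinner]
      apply Finset.sum_congr rfl
      intro i _
      rw [hrA, hu, hrG]; ring
    have hAvv : ⟪A v, v⟫ = ∑ i, μ i * (r v i) ^ 2 := by
      rw [hinner]
      exact Finset.sum_congr rfl fun i _ => by rw [hrA]; ring
    rw [hnorm, hAvv, Finset.mul_sum]
    apply Finset.sum_le_sum
    intro i _
    have : (μ i) ^ 2 * (1 - μ i / Λ) ^ (2 * m₁) ≤ Λ * (1 + 2 * (m₁ : ℝ))⁻¹ * μ i := by
      have := mul_le_mul_of_nonneg_right (hkey i m₁) (hμ0 i)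
      nlinarith [hμ0 i]
    calc (μ i) ^ 2 * (1 - μ i / Λ) ^ (2 * m₁) * (r v i) ^ 2
        ≤ Λ * (1 + 2 * (m₁ : ℝ))⁻¹ * μ i * (r v i) ^ 2 :=
          mul_le_mul_of_nonneg_right this (sq_nonneg _)
      _ = Λ * (1 + 2 * (m₁ : ℝ))⁻¹ * (μ i * (r v i) ^ 2) := by ring
  -- combine
  have hc1 : (0:ℝ) ≤ Λ * (1 + 2 * (m₂ : ℝ))⁻¹ := by positivity
  have hc2 : (0:ℝ) ≤ C_A ^ 2 := by positivity
  calc ⟪A (E v), E v⟫ ≤ Λ * (1 + 2 * (m₂ : ℝ))⁻¹ * ‖w‖ ^ 2 := step1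
    _ ≤ Λ * (1 + 2 * (m₂ : ℝ))⁻¹ * (C_A ^ 2 * ‖A u‖ ^ 2) :=
        mul_le_mul_of_nonneg_left step2 hc1
    _ ≤ Λ * (1 + 2 * (m₂ : ℝ))⁻¹ * (C_A ^ 2 * (Λ * (1 + 2 * (m₁ : ℝ))⁻¹ * ⟪A v, v⟫)) := by
        apply mul_le_mul_of_nonneg_left _ hc1
        exact mul_le_mul_of_nonneg_left step3 hc2
    _ = C_A ^ 2 * Λ ^ 2 * (1 + 2 * (m₁ : ℝ))⁻¹ * (1 + 2 * (m₂ : ℝ))⁻¹ * ⟪A v, v⟫ := by ring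
end

section
/- Let V_c and V be finite-dimensional real inner product spaces, A : V → V and A_c : V_c → V_c self-adjoint positive semidefinite linear operators, Λ > 0 with ⟨A v, v⟩ ≤ Λ ⟨v, v⟩ for all v ∈ V, and G = id − Λ⁻¹ A. Let I_c : V_c → V and P : V → V_c be linear operators and assume: (i) prolongation stability ⟨A (I_c w), I_c w⟩ ≤ C_stab² ⟨A_c w, w⟩ for all w ∈ V_c; (ii) projection stability ⟨A_c (P v), P v⟩ ≤ C_stab² ⟨A v, v⟩ for all v ∈ V; (iii) the approximation property ‖v − I_c (P v)‖ ≤ C_A ‖A v‖ for all v ∈ V; (iv) the coarse-level error operator E_c : V_c → V_c satisfies ⟨A_c (E_c w), E_c w⟩ ≤ δ² ⟨A_c w, w⟩ for all w ∈ V_c, for some δ ≥ 0. For m₁, m₂ ∈ ℕ define the W-cycle error propagation operator E = G^{m₂} ∘ (id − I_c ∘ (id − E_c ∘ E_c) ∘ P) ∘ G^{m₁}. Then for every v ∈ V, √⟨A (E v), E v⟩ ≤ ( C_A Λ ((1 + 2 m₁)(1 + 2 m₂))^{−1/2} + C_stab² δ² ) √⟨A v, v⟩. -/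
open scoped RealInnerProductSpace

section Aux

variable {V : Type*} [NormedAddCommGroup V] [InnerProductSpace ℝ V]

/-- Cauchy–Schwarz for a symmetric positive semidefinite operator. -/
lemma psd_inner_mul_le (B : V →ₗ[ℝ] V) (hB : B.IsSymmetric)
    (hBpos : ∀ x : V, 0 ≤ ⟪B x, x⟫) (x y : V) :
    ⟪B x, y⟫ ^ 2 ≤ ⟪B x, x⟫ * ⟪B y, y⟫ := by
  have h : ∀ t : ℝ, 0 ≤ ⟪B y, y⟫ * (t * t) + (2 * ⟪B x, y⟫) * t + ⟪B x, x⟫ := by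
    intro t
    have h0 := hBpos (x + t • y)
    have hxy : ⟪B y, x⟫ = ⟪B x, y⟫ := by
      rw [hB y x, real_inner_comm]
    simp only [map_add, map_smul, inner_add_left, inner_add_right, real_inner_smul_left,
      real_inner_smul_right, hxy] at h0
    nlinarith [h0]
  have hd := discrim_le_zero h
  rw [discrim] at hd
  nlinarith [hd]

/-- Triangle inequality for the seminorm induced by a symmetric psd operator. -/
lemma psd_sqrt_add_le (B : V →ₗ[ℝ] V) (hB : B.IsSymmetric)
    (hBpos : ∀ x : V, 0 ≤ ⟪B x, x⟫) (x y : V) :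
    Real.sqrt ⟪B (x + y), x + y⟫ ≤ Real.sqrt ⟪B x, x⟫ + Real.sqrt ⟪B y, y⟫ := by
  have hcs := psd_inner_mul_le B hB hBpos x y
  have hx := hBpos x
  have hy := hBpos y
  have hxy : ⟪B x, y⟫ ≤ Real.sqrt ⟪B x, x⟫ * Real.sqrt ⟪B y, y⟫ := by
    calc ⟪B x, y⟫ ≤ |⟪B x, y⟫| := le_abs_self _
      _ = Real.sqrt (⟪B x, y⟫ ^ 2) := (Real.sqrt_sq_eq_abs _).symm
      _ ≤ Real.sqrt (⟪B x, x⟫ * ⟪B y, y⟫) := Real.sqrt_le_sqrt hcs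
      _ = _ := Real.sqrt_mul hx _
  have expand : ⟪B (x + y), x + y⟫ = ⟪B x, x⟫ + 2 * ⟪B x, y⟫ + ⟪B y, y⟫ := by
    have hyx : ⟪B y, x⟫ = ⟪B x, y⟫ := by rw [hB y x, real_inner_comm]
    simp only [map_add, inner_add_left, inner_add_right, hyx]
    ring
  rw [expand]
  have hsq : ⟪B x, x⟫ + 2 * ⟪B x, y⟫ + ⟪B y, y⟫
      ≤ (Real.sqrt ⟪B x, x⟫ + Real.sqrt ⟪B y, y⟫) ^ 2 := by
    have sx : Real.sqrt ⟪B x, x⟫ ^ 2 = ⟪B x, x⟫ := Real.sq_sqrt hx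
    have sy : Real.sqrt ⟪B y, y⟫ ^ 2 = ⟪B y, y⟫ := Real.sq_sqrt hy
    nlinarith [hxy, Real.sqrt_nonneg ⟪B x, x⟫, Real.sqrt_nonneg ⟪B y, y⟫]
  calc Real.sqrt _ ≤ Real.sqrt ((Real.sqrt ⟪B x, x⟫ + Real.sqrt ⟪B y, y⟫) ^ 2) :=
        Real.sqrt_le_sqrt hsq
    _ = _ := Real.sqrt_sq (by positivity)

variable (A G : V →ₗ[ℝ] V) (Λ : ℝ)

lemma smoother_comm_pow' (hG : G = LinearMap.id - Λ⁻¹ • A) (j : ℕ) (x : V) :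
    A ((G ^ j) x) = (G ^ j) (A x) := by
  have h : Commute A G := by
    rw [hG]
    have h1 : Commute A (LinearMap.id : V →ₗ[ℝ] V) := by
      rw [← Module.End.one_eq_id]; exact Commute.one_right A
    exact h1.sub_right ((Commute.refl A).smul_right Λ⁻¹)
  have h2 := h.pow_right j
  calc A ((G ^ j) x) = (A * G ^ j) x := rfl
    _ = (G ^ j * A) x := by rw [h2]
    _ = (G ^ j) (A x) := rfl

lemma smoother_symm' (hA : A.IsSymmetric) (hG : G = LinearMap.id - Λ⁻¹ • A) :
    G.IsSymmetric := by
  intro x y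
  rw [hG]
  simp only [LinearMap.sub_apply, LinearMap.smul_apply, LinearMap.id_apply,
    inner_sub_left, inner_sub_right, real_inner_smul_left, real_inner_smul_right, hA x y]

lemma smoother_pos' (hΛ : 0 < Λ) (hΛ_ub : ∀ v : V, ⟪A v, v⟫ ≤ Λ * ⟪v, v⟫)
    (hG : G = LinearMap.id - Λ⁻¹ • A) (u : V) : 0 ≤ ⟪G u, u⟫ := by
  rw [hG]
  simp only [LinearMap.sub_apply, LinearMap.smul_apply, LinearMap.id_apply,
    inner_sub_left, real_inner_smul_left]
  have h := mul_le_mul_of_nonneg_left (hΛ_ub u) (inv_nonneg.mpr hΛ.le)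
  rw [← mul_assoc, inv_mul_cancel₀ hΛ.ne', one_mul] at h
  linarith

lemma smoother_le_one' (hA_pos : ∀ v : V, 0 ≤ ⟪A v, v⟫) (hΛ : 0 < Λ)
    (hG : G = LinearMap.id - Λ⁻¹ • A) (u : V) : ⟪G u, u⟫ ≤ ⟪u, u⟫ := by
  rw [hG]
  simp only [LinearMap.sub_apply, LinearMap.smul_apply, LinearMap.id_apply,
    inner_sub_left, real_inner_smul_left]
  have h : 0 ≤ Λ⁻¹ * ⟪A u, u⟫ := mul_nonneg (inv_nonneg.mpr hΛ.le) (hA_pos u)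
  linarith

lemma opA_sq_le' (hA : A.IsSymmetric) (hA_pos : ∀ v : V, 0 ≤ ⟪A v, v⟫)
    (hΛ : 0 < Λ) (hΛ_ub : ∀ v : V, ⟪A v, v⟫ ≤ Λ * ⟪v, v⟫) (w : V) :
    ⟪A w, A w⟫ ≤ Λ * ⟪A w, w⟫ := by
  have hcs := psd_inner_mul_le A hA hA_pos w (A w)
  have h2 : ⟪A (A w), A w⟫ ≤ Λ * ⟪A w, A w⟫ := hΛ_ub (A w)
  have h0 : (0:ℝ) ≤ ⟪A w, A w⟫ := real_inner_self_nonneg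
  have h1 : (0:ℝ) ≤ ⟪A w, w⟫ := hA_pos w
  nlinarith [hcs, h2, h0, h1, hΛ, mul_nonneg hΛ.le h1]

lemma smoother_sq_le' (hA : A.IsSymmetric) (hA_pos : ∀ v : V, 0 ≤ ⟪A v, v⟫)
    (hΛ : 0 < Λ) (hΛ_ub : ∀ v : V, ⟪A v, v⟫ ≤ Λ * ⟪v, v⟫)
    (hG : G = LinearMap.id - Λ⁻¹ • A) (w : V) :
    ⟪G w, G w⟫ ≤ ⟪G w, w⟫ := by
  have hGsym := smoother_symm' A G Λ hA hG
  have hGpos := smoother_pos' A G Λ hΛ hΛ_ub hG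
  have hGle := smoother_le_one' A G Λ hA_pos hΛ hG
  have hcs := psd_inner_mul_le G hGsym hGpos w (G w)
  have h2 : ⟪G (G w), G w⟫ ≤ ⟪G w, G w⟫ := hGle (G w)
  have h0 : (0:ℝ) ≤ ⟪G w, G w⟫ := real_inner_self_nonneg
  have h1 : (0:ℝ) ≤ ⟪G w, w⟫ := hGpos w
  nlinarith [hcs, h2, h0, h1]

lemma smoother_t_nonneg' (hA : A.IsSymmetric) (hΛ : 0 < Λ)
    (hΛ_ub : ∀ v : V, ⟪A v, v⟫ ≤ Λ * ⟪v, v⟫)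
    (hG : G = LinearMap.id - Λ⁻¹ • A) (j : ℕ) (u : V) :
    0 ≤ ⟪(G ^ j) u, u⟫ := by
  have hGsym := smoother_symm' A G Λ hA hG
  have hGpos := smoother_pos' A G Λ hΛ hΛ_ub hG
  rcases Nat.even_or_odd j with ⟨k, hk⟩ | ⟨k, hk⟩
  · subst hk
    have : (G ^ (k + k)) u = (G ^ k) ((G ^ k) u) := by rw [pow_add]; rfl
    rw [this, hGsym.pow k]
    exact real_inner_self_nonneg
  · subst hk
    have hsplit : (G ^ (2 * k + 1)) u = (G ^ k) (G ((G ^ k) u)) := by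
      have : 2 * k + 1 = k + (1 + k) := by ring
      rw [this, pow_add, pow_add, pow_one]; rfl
    rw [hsplit, hGsym.pow k]
    exact hGpos _

lemma smoother_t_mono' (hA : A.IsSymmetric) (hA_pos : ∀ v : V, 0 ≤ ⟪A v, v⟫)
    (hΛ : 0 < Λ) (hΛ_ub : ∀ v : V, ⟪A v, v⟫ ≤ Λ * ⟪v, v⟫)
    (hG : G = LinearMap.id - Λ⁻¹ • A) (u : V) :
    Antitone (fun j : ℕ => ⟪(G ^ j) u, u⟫) := by
  have hGsym := smoother_symm' A G Λ hA hG
  have hGle := smoother_le_one' A G Λ hA_pos hΛ hG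
  apply antitone_nat_of_succ_le
  intro j
  rcases Nat.even_or_odd j with ⟨k, hk⟩ | ⟨k, hk⟩
  · subst hk
    have h1 : (G ^ (k + k + 1)) u = (G ^ k) (G ((G ^ k) u)) := by
      have : k + k + 1 = k + (1 + k) := by ring
      rw [this, pow_add, pow_add, pow_one]; rfl
    have h2 : (G ^ (k + k)) u = (G ^ k) ((G ^ k) u) := by rw [pow_add]; rfl
    rw [h1, h2, hGsym.pow k, hGsym.pow k]
    exact hGle _
  · subst hk
    have h1 : (G ^ (2 * k + 1 + 1)) u = (G ^ (k+1)) ((G ^ (k+1)) u) := by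
      have : 2 * k + 1 + 1 = (k + 1) + (k + 1) := by ring
      rw [this, pow_add]; rfl
    have h2 : (G ^ (2 * k + 1)) u = (G ^ k) (G ((G ^ k) u)) := by
      have : 2 * k + 1 = k + (1 + k) := by ring
      rw [this, pow_add, pow_add, pow_one]; rfl
    have h3 : (G ^ (k + 1)) u = G ((G ^ k) u) := by rw [pow_succ']; rfl
    rw [h1, h2, hGsym.pow (k+1), h3, hGsym.pow k]
    exact smoother_sq_le' A G Λ hA hA_pos hΛ hΛ_ub hG _

lemma smoother_diff' (hG : G = LinearMap.id - Λ⁻¹ • A) (j : ℕ) (x : V) :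
    (G ^ j) x - (G ^ (j + 1)) x = Λ⁻¹ • (G ^ j) (A x) := by
  have h1 : x - G x = Λ⁻¹ • A x := by
    rw [hG]; simp [LinearMap.sub_apply]
  have h2 : (G ^ (j + 1)) x = (G ^ j) (G x) := by rw [pow_succ]; rfl
  rw [h2, ← map_sub, h1, map_smul]

variable (hA : A.IsSymmetric) (hA_pos : ∀ v : V, 0 ≤ ⟪A v, v⟫)
  (hΛ : 0 < Λ) (hΛ_ub : ∀ v : V, ⟪A v, v⟫ ≤ Λ * ⟪v, v⟫)
  (hG : G = LinearMap.id - Λ⁻¹ • A)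

include hA hA_pos hΛ hΛ_ub hG

/-- The energy sequence `c j = ⟪A (G^j x), x⟫` is nonneg at odd indices. -/
lemma smoother_c_odd_nonneg (k : ℕ) (x : V) :
    0 ≤ ⟪A ((G ^ (2 * k + 1)) x), x⟫ := by
  have hGsym := smoother_symm' A G Λ hA hG
  set w := (G ^ k) x with hw
  have hsplit : (G ^ (2 * k + 1)) x = (G ^ k) (G w) := by
    have : 2 * k + 1 = k + (1 + k) := by ring
    rw [this, pow_add, pow_add, pow_one]; rfl
  have hAcomm := smoother_comm_pow' A G Λ hG k (G w)
  rw [hsplit, hAcomm, hGsym.pow k]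
  have hGw : G w = w - Λ⁻¹ • A w := by rw [hG]; simp [LinearMap.sub_apply]
  rw [hGw, map_sub, map_smul, inner_sub_left, real_inner_smul_left]
  have h1 : ⟪A (A w), (G ^ k) x⟫ = ⟪A w, A w⟫ := by
    rw [hA (A w), ← hw]
  rw [← hw, h1]
  have h2 := opA_sq_le' A Λ hA hA_pos hΛ hΛ_ub w
  have h3 := mul_le_mul_of_nonneg_left h2 (inv_nonneg.mpr hΛ.le)
  rw [← mul_assoc, inv_mul_cancel₀ hΛ.ne', one_mul] at h3
  have hAww : ⟪A ((G^k) x), (G^k) x⟫ = ⟪A w, w⟫ := by rw [hw]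
  rw [hAww]
  linarith

omit hA_pos in
/-- The energy sequence is antitone. -/
lemma smoother_c_mono (x : V) :
    Antitone (fun j : ℕ => ⟪A ((G ^ j) x), x⟫) := by
  apply antitone_nat_of_succ_le
  intro j
  have hd := smoother_diff' A G Λ hG j x
  have key : ⟪A ((G ^ j) x), x⟫ - ⟪A ((G ^ (j+1)) x), x⟫
      = Λ⁻¹ * ⟪(G ^ j) (A x), A x⟫ := by
    rw [← inner_sub_left, ← map_sub, hd, map_smul, real_inner_smul_left,
      hA ((G ^ j) (A x)) x]
  have h0 : 0 ≤ Λ⁻¹ * ⟪(G ^ j) (A x), A x⟫ :=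
    mul_nonneg (inv_nonneg.mpr hΛ.le) (smoother_t_nonneg' A G Λ hA hΛ hΛ_ub hG j (A x))
  show ⟪A ((G ^ (j+1)) x), x⟫ ≤ ⟪A ((G ^ j) x), x⟫
  linarith [key, h0]

omit hA_pos hΛ hΛ_ub in
lemma smoother_c_diff (j : ℕ) (x : V) :
    ⟪A ((G ^ j) x), x⟫ - ⟪A ((G ^ (j+1)) x), x⟫ = Λ⁻¹ * ⟪(G ^ j) (A x), A x⟫ := by
  rw [← inner_sub_left, ← map_sub, smoother_diff' A G Λ hG j x, map_smul,
    real_inner_smul_left, hA ((G ^ j) (A x)) x]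

omit hA hA_pos hΛ hΛ_ub hG in
lemma smoother_pow_split (m : ℕ) (x : V) :
    (G ^ (2 * m)) x = (G ^ m) ((G ^ m) x) := by
  rw [two_mul, pow_add]; rfl

omit hA_pos hΛ hΛ_ub in
lemma smoother_C_eq (m : ℕ) (x : V) :
    ⟪A ((G ^ (2 * m)) x), x⟫ = ⟪A ((G ^ m) x), (G ^ m) x⟫ := by
  have hGsym := smoother_symm' A G Λ hA hG
  rw [smoother_pow_split G, smoother_comm_pow' A G Λ hG m ((G ^ m) x),
    hGsym.pow m]

/-- Smoothing property: `(2m+1) ‖A G^m x‖² ≤ Λ ⟪A x, x⟫`. -/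
lemma smoothing_one (m : ℕ) (x : V) :
    (2 * (m:ℝ) + 1) * ⟪A ((G ^ m) x), A ((G ^ m) x)⟫ ≤ Λ * ⟪A x, x⟫ := by
  have hGsym := smoother_symm' A G Λ hA hG
  set u := A x with hu
  set c : ℕ → ℝ := fun j => ⟪A ((G ^ j) x), x⟫ with hc
  set d : ℕ → ℝ := fun j => ⟪(G ^ j) u, u⟫ with hd
  have hsum : ∑ j ∈ Finset.range (2*m+1), (c j - c (j+1)) = c 0 - c (2*m+1) :=
    Finset.sum_range_sub' c (2*m+1)
  have hmono := smoother_t_mono' A G Λ hA hA_pos hΛ hΛ_ub hG u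
  have hlower : ∀ j ∈ Finset.range (2*m+1), Λ⁻¹ * d (2*m) ≤ c j - c (j+1) := by
    intro j hj
    have hdiff : c j - c (j+1) = Λ⁻¹ * ⟪(G ^ j) u, u⟫ := by
      rw [hc]; exact smoother_c_diff A G Λ hA hG j x
    rw [hdiff]
    exact mul_le_mul_of_nonneg_left
      (hmono (Nat.le_of_lt_succ (Finset.mem_range.mp hj))) (inv_nonneg.mpr hΛ.le)
  have hsumlow := Finset.card_nsmul_le_sum (Finset.range (2*m+1)) _ _ hlower
  rw [Finset.card_range, nsmul_eq_mul, hsum] at hsumlow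
  have hcodd : 0 ≤ c (2*m+1) := smoother_c_odd_nonneg A G Λ hA hA_pos hΛ hΛ_ub hG m x
  have hc0 : c 0 = ⟪A x, x⟫ := by simp [hc]
  have hd2m : d (2*m) = ⟪A ((G ^ m) x), A ((G ^ m) x)⟫ := by
    rw [hd]
    simp only
    rw [smoother_pow_split G, hGsym.pow m, hu, ← smoother_comm_pow' A G Λ hG m x]
  have hkey : ((2*m+1 : ℕ) : ℝ) * (Λ⁻¹ * d (2*m)) ≤ ⟪A x, x⟫ := by
    rw [← hc0]; linarith [hsumlow, hcodd]
  have hcast : ((2*m+1 : ℕ) : ℝ) = 2*(m:ℝ)+1 := by push_cast; ring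
  rw [hcast] at hkey
  calc (2*(m:ℝ)+1) * ⟪A ((G ^ m) x), A ((G ^ m) x)⟫
      = Λ * ((2*(m:ℝ)+1) * (Λ⁻¹ * d (2*m))) := by
        rw [hd2m]; field_simp
    _ ≤ Λ * ⟪A x, x⟫ := mul_le_mul_of_nonneg_left hkey hΛ.le

/-- Smoothing property: `(2m+1) ⟪A G^m x, G^m x⟫ ≤ Λ ⟪x, x⟫`. -/
lemma smoothing_two (m : ℕ) (x : V) :
    (2 * (m:ℝ) + 1) * ⟪A ((G ^ m) x), (G ^ m) x⟫ ≤ Λ * ⟪x, x⟫ := by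
  set e : ℕ → ℝ := fun j => ⟪(G ^ j) x, x⟫ with he
  set C : ℕ → ℝ := fun j => ⟪A ((G ^ j) x), x⟫ with hC
  have hsum : ∑ j ∈ Finset.range (2*m+1), (e j - e (j+1)) = e 0 - e (2*m+1) :=
    Finset.sum_range_sub' e (2*m+1)
  have hmono := smoother_c_mono A G Λ hA hΛ hΛ_ub hG x
  have hdiffe : ∀ j : ℕ, e j - e (j+1) = Λ⁻¹ * C j := by
    intro j
    have h1 : e j - e (j+1) = ⟪(G ^ j) x - (G ^ (j+1)) x, x⟫ := by
      rw [he, inner_sub_left]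
    rw [h1, smoother_diff' A G Λ hG j x, real_inner_smul_left, hC]
    simp only
    rw [← smoother_comm_pow' A G Λ hG j x]
  have hlower : ∀ j ∈ Finset.range (2*m+1), Λ⁻¹ * C (2*m) ≤ e j - e (j+1) := by
    intro j hj
    rw [hdiffe j]
    exact mul_le_mul_of_nonneg_left
      (hmono (Nat.le_of_lt_succ (Finset.mem_range.mp hj))) (inv_nonneg.mpr hΛ.le)
  have hsumlow := Finset.card_nsmul_le_sum (Finset.range (2*m+1)) _ _ hlower
  rw [Finset.card_range, nsmul_eq_mul, hsum] at hsumlow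
  have heodd : 0 ≤ e (2*m+1) := smoother_t_nonneg' A G Λ hA hΛ hΛ_ub hG (2*m+1) x
  have he0 : e 0 = ⟪x, x⟫ := by simp [he]
  have hC2m : C (2*m) = ⟪A ((G ^ m) x), (G ^ m) x⟫ :=
    smoother_C_eq A G Λ hA hG m x
  have hkey : ((2*m+1 : ℕ) : ℝ) * (Λ⁻¹ * C (2*m)) ≤ ⟪x, x⟫ := by
    rw [← he0]; linarith [hsumlow, heodd]
  have hcast : ((2*m+1 : ℕ) : ℝ) = 2*(m:ℝ)+1 := by push_cast; ring
  rw [hcast] at hkey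
  calc (2*(m:ℝ)+1) * ⟪A ((G ^ m) x), (G ^ m) x⟫
      = Λ * ((2*(m:ℝ)+1) * (Λ⁻¹ * C (2*m))) := by
        rw [hC2m]; field_simp
    _ ≤ Λ * ⟪x, x⟫ := mul_le_mul_of_nonneg_left hkey hΛ.le

omit hA_pos in
/-- Energy nonexpansiveness of the smoother. -/
lemma smoother_nonexpansive (m : ℕ) (x : V) :
    ⟪A ((G ^ m) x), (G ^ m) x⟫ ≤ ⟪A x, x⟫ := by
  have hmono := smoother_c_mono A G Λ hA hΛ hΛ_ub hG x
  have h := hmono (Nat.zero_le (2*m))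
  simp only at h
  rw [smoother_C_eq A G Λ hA hG m x] at h
  simpa using h

end Aux

/-- W-cycle inductive step: with `A`, `A_c` self-adjoint positive semidefinite on the fine and
coarse spaces, `Λ > 0` a spectral bound for `A`, `G = id - Λ⁻¹ • A` the Richardson smoother,
prolongation `I_c` and projection `P` stable in the energy norms with constant `C_stab`,
approximation property `‖v - I_c (P v)‖ ≤ C_A ‖A v‖`, and a coarse-level error operator `E_c`
that is a `δ`-contraction in the coarse energy norm, the W-cycle error propagation operator
`E = G^m₂ ∘ (id - I_c ∘ (id - E_c ∘ E_c) ∘ P) ∘ G^m₁` satisfies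
`√⟪A (E v), E v⟫ ≤ (C_A Λ ((1+2m₁)(1+2m₂))^(-1/2) + C_stab² δ²) √⟪A v, v⟫`. -/
theorem wcycle_energy_contraction
    {V_c : Type*} [NormedAddCommGroup V_c] [InnerProductSpace ℝ V_c] [FiniteDimensional ℝ V_c]
    {V : Type*} [NormedAddCommGroup V] [InnerProductSpace ℝ V] [FiniteDimensional ℝ V]
    (A : V →ₗ[ℝ] V) (hA : LinearMap.IsSymmetric A)
    (hA_pos : ∀ v : V, 0 ≤ ⟪A v, v⟫)
    (A_c : V_c →ₗ[ℝ] V_c) (hA_c : LinearMap.IsSymmetric A_c)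
    (hA_c_pos : ∀ w : V_c, 0 ≤ ⟪A_c w, w⟫)
    (Λ : ℝ) (hΛ : 0 < Λ) (hΛ_ub : ∀ v : V, ⟪A v, v⟫ ≤ Λ * ⟪v, v⟫)
    (G : V →ₗ[ℝ] V) (hG : G = LinearMap.id - Λ⁻¹ • A)
    (I_c : V_c →ₗ[ℝ] V) (P : V →ₗ[ℝ] V_c)
    (C_stab : ℝ)
    (hI_stab : ∀ w : V_c, ⟪A (I_c w), I_c w⟫ ≤ C_stab ^ 2 * ⟪A_c w, w⟫)
    (hP_stab : ∀ v : V, ⟪A_c (P v), P v⟫ ≤ C_stab ^ 2 * ⟪A v, v⟫)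
    (C_A : ℝ) (hC_A : 0 < C_A)
    (happrox : ∀ v : V, ‖v - I_c (P v)‖ ≤ C_A * ‖A v‖)
    (E_c : V_c →ₗ[ℝ] V_c) (δ : ℝ) (hδ : 0 ≤ δ)
    (hE_c : ∀ w : V_c, ⟪A_c (E_c w), E_c w⟫ ≤ δ ^ 2 * ⟪A_c w, w⟫)
    (m₁ m₂ : ℕ)
    (E : V →ₗ[ℝ] V)
    (hE : E = (G ^ m₂) ∘ₗ
      (LinearMap.id - I_c ∘ₗ (LinearMap.id - E_c ∘ₗ E_c) ∘ₗ P) ∘ₗ (G ^ m₁))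
    (v : V) :
    Real.sqrt ⟪A (E v), E v⟫ ≤
      (C_A * Λ * ((1 + 2 * (m₁ : ℝ)) * (1 + 2 * (m₂ : ℝ))) ^ (-(1 / 2 : ℝ)) +
        C_stab ^ 2 * δ ^ 2) * Real.sqrt ⟪A v, v⟫ := by
  -- set up
  have hs0 : 0 ≤ Real.sqrt ⟪A v, v⟫ := Real.sqrt_nonneg _
  have hs2 : Real.sqrt ⟪A v, v⟫ ^ 2 = ⟪A v, v⟫ := Real.sq_sqrt (hA_pos v)
  set s := Real.sqrt ⟪A v, v⟫ with hs
  set u₁ := (G ^ m₁) v with hu₁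
  set w₁ := u₁ - I_c (P u₁) with hw₁
  set w₂ := I_c (E_c (E_c (P u₁))) with hw₂
  have hEv : E v = (G ^ m₂) w₁ + (G ^ m₂) w₂ := by
    have h0 : E v = (G ^ m₂) (u₁ - I_c (P u₁ - E_c (E_c (P u₁)))) := by
      rw [hE]; rfl
    have hmid : u₁ - I_c (P u₁ - E_c (E_c (P u₁))) = w₁ + w₂ := by
      rw [map_sub I_c, hw₁, hw₂]
      abel
    rw [h0, hmid, map_add]
  have hN₁ : (0:ℝ) < 2 * (m₁:ℝ) + 1 := by positivity
  have hN₂ : (0:ℝ) < 2 * (m₂:ℝ) + 1 := by positivity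
  set N₁ : ℝ := 2 * (m₁:ℝ) + 1 with hN₁def
  set N₂ : ℝ := 2 * (m₂:ℝ) + 1 with hN₂def
  -- term 1 : two-level part
  have h1a : N₂ * ⟪A ((G ^ m₂) w₁), (G ^ m₂) w₁⟫ ≤ Λ * ⟪w₁, w₁⟫ :=
    smoothing_two A G Λ hA hA_pos hΛ hΛ_ub hG m₂ w₁
  have h1b : ⟪w₁, w₁⟫ ≤ C_A ^ 2 * ⟪A u₁, A u₁⟫ := by
    have h := happrox u₁
    rw [← hw₁] at h
    have h2 : ‖w₁‖ ^ 2 ≤ (C_A * ‖A u₁‖) ^ 2 := by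
      have := norm_nonneg w₁
      nlinarith [h, norm_nonneg (A u₁), norm_nonneg w₁]
    rw [real_inner_self_eq_norm_sq, real_inner_self_eq_norm_sq]
    calc ‖w₁‖ ^ 2 ≤ (C_A * ‖A u₁‖) ^ 2 := h2
      _ = C_A ^ 2 * ‖A u₁‖ ^ 2 := by ring
  have h1c : N₁ * ⟪A u₁, A u₁⟫ ≤ Λ * ⟪A v, v⟫ :=
    smoothing_one A G Λ hA hA_pos hΛ hΛ_ub hG m₁ v
  have hterm1sq : ⟪A ((G ^ m₂) w₁), (G ^ m₂) w₁⟫ * (N₁ * N₂)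
      ≤ C_A ^ 2 * Λ ^ 2 * ⟪A v, v⟫ := by
    have s1 : N₁ * (N₂ * ⟪A ((G ^ m₂) w₁), (G ^ m₂) w₁⟫) ≤ N₁ * (Λ * ⟪w₁, w₁⟫) :=
      mul_le_mul_of_nonneg_left h1a hN₁.le
    have s2 : N₁ * (Λ * ⟪w₁, w₁⟫) ≤ N₁ * (Λ * (C_A ^ 2 * ⟪A u₁, A u₁⟫)) := by
      apply mul_le_mul_of_nonneg_left _ hN₁.le
      exact mul_le_mul_of_nonneg_left h1b hΛ.le
    have s3 : (Λ * C_A ^ 2) * (N₁ * ⟪A u₁, A u₁⟫) ≤ (Λ * C_A ^ 2) * (Λ * ⟪A v, v⟫) :=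
      mul_le_mul_of_nonneg_left h1c (by positivity)
    nlinarith [s1, s2, s3]
  set K₁ : ℝ := C_A * Λ * ((1 + 2 * (m₁:ℝ)) * (1 + 2 * (m₂:ℝ))) ^ (-(1 / 2 : ℝ)) with hK₁
  have hNprod : (1 + 2 * (m₁:ℝ)) * (1 + 2 * (m₂:ℝ)) = N₁ * N₂ := by
    rw [hN₁def, hN₂def]; ring
  have hK₁eq : K₁ = C_A * Λ * (Real.sqrt (N₁ * N₂))⁻¹ := by
    rw [hK₁, hNprod, Real.rpow_neg (by positivity), ← Real.sqrt_eq_rpow]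
  have hK₁pos : 0 < K₁ := by
    rw [hK₁eq]
    have : 0 < Real.sqrt (N₁ * N₂) := Real.sqrt_pos.mpr (by positivity)
    positivity
  have hT1 : Real.sqrt ⟪A ((G ^ m₂) w₁), (G ^ m₂) w₁⟫ ≤ K₁ * s := by
    have hb : ⟪A ((G ^ m₂) w₁), (G ^ m₂) w₁⟫ ≤ (K₁ * s) ^ 2 := by
      have hKsq : (K₁ * s) ^ 2 = C_A ^ 2 * Λ ^ 2 * (N₁ * N₂)⁻¹ * ⟪A v, v⟫ := by
        rw [hK₁eq, ← hs2]
        have hss : (Real.sqrt (N₁ * N₂))⁻¹ ^ 2 = (N₁ * N₂)⁻¹ := by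
          rw [← Real.sqrt_inv, Real.sq_sqrt (by positivity)]
        calc (C_A * Λ * (Real.sqrt (N₁ * N₂))⁻¹ * s) ^ 2
            = C_A ^ 2 * Λ ^ 2 * ((Real.sqrt (N₁ * N₂))⁻¹ ^ 2) * s ^ 2 := by ring
          _ = C_A ^ 2 * Λ ^ 2 * (N₁ * N₂)⁻¹ * s ^ 2 := by rw [hss]
      rw [hKsq]
      rw [← le_div_iff₀ (by positivity : (0:ℝ) < N₁ * N₂)] at hterm1sq
      calc ⟪A ((G ^ m₂) w₁), (G ^ m₂) w₁⟫
          ≤ C_A ^ 2 * Λ ^ 2 * ⟪A v, v⟫ / (N₁ * N₂) := hterm1sq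
        _ = C_A ^ 2 * Λ ^ 2 * (N₁ * N₂)⁻¹ * ⟪A v, v⟫ := by ring
    calc Real.sqrt ⟪A ((G ^ m₂) w₁), (G ^ m₂) w₁⟫
        ≤ Real.sqrt ((K₁ * s) ^ 2) := Real.sqrt_le_sqrt hb
      _ = K₁ * s := Real.sqrt_sq (by positivity)
  -- term 2 : coarse perturbation part
  have h2a : ⟪A ((G ^ m₂) w₂), (G ^ m₂) w₂⟫ ≤ ⟪A w₂, w₂⟫ :=
    smoother_nonexpansive A G Λ hA hΛ hΛ_ub hG m₂ w₂
  have h2b : ⟪A w₂, w₂⟫ ≤ C_stab ^ 2 * ⟪A_c (E_c (E_c (P u₁))), E_c (E_c (P u₁))⟫ := by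
    rw [hw₂]; exact hI_stab _
  have h2c : ⟪A_c (E_c (E_c (P u₁))), E_c (E_c (P u₁))⟫
      ≤ δ ^ 2 * (δ ^ 2 * ⟪A_c (P u₁), P u₁⟫) := by
    calc ⟪A_c (E_c (E_c (P u₁))), E_c (E_c (P u₁))⟫
        ≤ δ ^ 2 * ⟪A_c (E_c (P u₁)), E_c (P u₁)⟫ := hE_c _
      _ ≤ δ ^ 2 * (δ ^ 2 * ⟪A_c (P u₁), P u₁⟫) :=
          mul_le_mul_of_nonneg_left (hE_c _) (by positivity)
  have h2d : ⟪A_c (P u₁), P u₁⟫ ≤ C_stab ^ 2 * ⟪A v, v⟫ := by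
    calc ⟪A_c (P u₁), P u₁⟫ ≤ C_stab ^ 2 * ⟪A u₁, u₁⟫ := hP_stab _
      _ ≤ C_stab ^ 2 * ⟪A v, v⟫ := by
          apply mul_le_mul_of_nonneg_left _ (by positivity)
          exact smoother_nonexpansive A G Λ hA hΛ hΛ_ub hG m₁ v
  have hterm2sq : ⟪A ((G ^ m₂) w₂), (G ^ m₂) w₂⟫ ≤ (C_stab ^ 2 * δ ^ 2 * s) ^ 2 := by
    have hc1 : ⟪A w₂, w₂⟫ ≤ C_stab ^ 2 * (δ ^ 2 * (δ ^ 2 * (C_stab ^ 2 * ⟪A v, v⟫))) := by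
      calc ⟪A w₂, w₂⟫ ≤ C_stab ^ 2 * ⟪A_c (E_c (E_c (P u₁))), E_c (E_c (P u₁))⟫ := h2b
        _ ≤ C_stab ^ 2 * (δ ^ 2 * (δ ^ 2 * ⟪A_c (P u₁), P u₁⟫)) :=
            mul_le_mul_of_nonneg_left h2c (by positivity)
        _ ≤ C_stab ^ 2 * (δ ^ 2 * (δ ^ 2 * (C_stab ^ 2 * ⟪A v, v⟫))) := by
            apply mul_le_mul_of_nonneg_left _ (by positivity)
            apply mul_le_mul_of_nonneg_left _ (by positivity)
            exact mul_le_mul_of_nonneg_left h2d (by positivity)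
    have : (C_stab ^ 2 * δ ^ 2 * s) ^ 2
        = C_stab ^ 2 * (δ ^ 2 * (δ ^ 2 * (C_stab ^ 2 * ⟪A v, v⟫))) := by
      rw [← hs2]; ring
    rw [this]
    exact h2a.trans hc1
  have hT2 : Real.sqrt ⟪A ((G ^ m₂) w₂), (G ^ m₂) w₂⟫ ≤ C_stab ^ 2 * δ ^ 2 * s := by
    calc Real.sqrt ⟪A ((G ^ m₂) w₂), (G ^ m₂) w₂⟫
        ≤ Real.sqrt ((C_stab ^ 2 * δ ^ 2 * s) ^ 2) := Real.sqrt_le_sqrt hterm2sq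
      _ = C_stab ^ 2 * δ ^ 2 * s := Real.sqrt_sq (by positivity)
  -- combine
  have htri := psd_sqrt_add_le A hA hA_pos ((G ^ m₂) w₁) ((G ^ m₂) w₂)
  rw [hEv]
  calc Real.sqrt ⟪A ((G ^ m₂) w₁ + (G ^ m₂) w₂), (G ^ m₂) w₁ + (G ^ m₂) w₂⟫
      ≤ Real.sqrt ⟪A ((G ^ m₂) w₁), (G ^ m₂) w₁⟫
        + Real.sqrt ⟪A ((G ^ m₂) w₂), (G ^ m₂) w₂⟫ := htri
    _ ≤ K₁ * s + C_stab ^ 2 * δ ^ 2 * s := add_le_add hT1 hT2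
    _ = (K₁ + C_stab ^ 2 * δ ^ 2) * s := by ring
end

section
/- Let V be a finite-dimensional real inner product space, A : V → V a self-adjoint positive semidefinite linear operator, Λ > 0 with ⟨A v, v⟩ ≤ Λ ⟨v, v⟩ for all v ∈ V, and G = id − Λ⁻¹ A. Then for all natural numbers s, t with t < s, every m ∈ ℕ, and every v ∈ V, ⟨A^s (G^m v), G^m v⟩ ≤ Λ^{s−t} · ( (s−t) / ((s−t) + 2m) )^{s−t} · ⟨A^t v, v⟩. In particular, writing |||v|||_s = √⟨A^s v, v⟩, one has |||G^m v|||_s ≤ Λ^{(s−t)/2} (1+m)^{(t−s)/2} (s−t)^{(s−t)/2} |||v|||_t. -/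
lemma richardson_key_scalar (k m : ℕ) (hk : 0 < k) {x : ℝ} (hx0 : 0 ≤ x) (hx1 : x ≤ 1) :
    x ^ k * (1 - x) ^ (2 * m) ≤ ((k : ℝ) / ((k : ℝ) + 2 * m)) ^ k := by
  have hK : (0 : ℝ) < k := by exact_mod_cast hk
  rcases Nat.eq_zero_or_pos m with hm | hm
  · subst hm
    simp only [Nat.cast_zero, mul_zero, pow_zero, mul_one, add_zero, div_self hK.ne']
    simpa using pow_le_one₀ hx0 hx1
  · have hM : (0 : ℝ) < 2 * m := by positivity
    set K : ℝ := (k : ℝ)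
    set M : ℝ := 2 * (m : ℝ)
    have hM' : (0 : ℝ) < M := by positivity
    have hN : (0 : ℝ) < K + M := by positivity
    set p₁ : ℝ := x * (K + M) / K with hp₁
    set p₂ : ℝ := (1 - x) * (K + M) / M with hp₂
    have hp₁0 : 0 ≤ p₁ := by positivity
    have hp₂0 : 0 ≤ p₂ := by
      have : 0 ≤ 1 - x := by linarith
      positivity
    have hw : K / (K + M) + M / (K + M) = 1 := by field_simp
    have hgm := Real.geom_mean_le_arith_mean2_weighted
      (by positivity : (0:ℝ) ≤ K / (K + M)) (by positivity : (0:ℝ) ≤ M / (K + M))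
      hp₁0 hp₂0 hw
    have hsum : K / (K + M) * p₁ + M / (K + M) * p₂ = 1 := by
      rw [hp₁, hp₂]; field_simp; ring
    rw [hsum] at hgm
    -- raise to the (k + 2m)-th power
    have hpow : (p₁ ^ (K / (K + M)) * p₂ ^ (M / (K + M))) ^ (k + 2 * m) ≤ 1 := by
      calc (p₁ ^ (K / (K + M)) * p₂ ^ (M / (K + M))) ^ (k + 2 * m)
          ≤ 1 ^ (k + 2 * m) := by
            apply pow_le_pow_left₀ (by positivity) hgm
        _ = 1 := one_pow _
    have hcast : ((k + 2 * m : ℕ) : ℝ) = K + M := by push_cast [K, M]; ring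
    have hL : (p₁ ^ (K / (K + M)) * p₂ ^ (M / (K + M))) ^ (k + 2 * m)
        = p₁ ^ k * p₂ ^ (2 * m) := by
      rw [mul_pow, ← Real.rpow_natCast (p₁ ^ (K / (K + M))) (k + 2*m),
        ← Real.rpow_natCast (p₂ ^ (M / (K + M))) (k + 2*m),
        ← Real.rpow_mul hp₁0, ← Real.rpow_mul hp₂0, hcast,
        div_mul_cancel₀ _ hN.ne', div_mul_cancel₀ _ hN.ne']
      have hM2 : M = ((2 * m : ℕ) : ℝ) := by push_cast [M]; ring
      rw [show K = ((k : ℕ) : ℝ) from rfl, hM2, Real.rpow_natCast, Real.rpow_natCast]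
    rw [hL] at hpow
    -- unfold p₁, p₂
    have hx' : x = p₁ * (K / (K + M)) := by rw [hp₁]; field_simp
    have h1x : 1 - x = p₂ * (M / (K + M)) := by rw [hp₂]; field_simp
    calc x ^ k * (1 - x) ^ (2 * m)
        = (p₁ ^ k * p₂ ^ (2 * m)) * ((K / (K + M)) ^ k * (M / (K + M)) ^ (2 * m)) := by
          rw [h1x, hx', mul_pow, mul_pow]; ring
      _ ≤ 1 * ((K / (K + M)) ^ k * (M / (K + M)) ^ (2 * m)) := by
          apply mul_le_mul_of_nonneg_right hpow; positivity
      _ = (K / (K + M)) ^ k * (M / (K + M)) ^ (2 * m) := one_mul _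
      _ ≤ (K / (K + M)) ^ k * 1 := by
          apply mul_le_mul_of_nonneg_left _ (by positivity)
          apply pow_le_one₀ (by positivity)
          rw [div_le_one hN]; linarith
      _ = (K / (K + M)) ^ k := mul_one _

open scoped RealInnerProductSpace

/-- General smoothing property: if `A` is a self-adjoint positive semidefinite operator on a
finite-dimensional real inner product space, `Λ > 0` with `⟪A v, v⟫ ≤ Λ ⟪v, v⟫` for all `v`,
and `G = id - Λ⁻¹ • A`, then for all naturals `t < s`, every `m` and every `v`,
`⟪A^s (G^m v), G^m v⟫ ≤ Λ^(s-t) * ((s-t) / ((s-t) + 2m))^(s-t) * ⟪A^t v, v⟫`. -/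
theorem richardson_smoothing_general
    {V : Type*} [NormedAddCommGroup V] [InnerProductSpace ℝ V] [FiniteDimensional ℝ V]
    (A : V →ₗ[ℝ] V) (hA : LinearMap.IsSymmetric A)
    (hA_pos : ∀ v : V, 0 ≤ ⟪A v, v⟫)
    (Λ : ℝ) (hΛ : 0 < Λ) (hΛ_ub : ∀ v : V, ⟪A v, v⟫ ≤ Λ * ⟪v, v⟫)
    (G : V →ₗ[ℝ] V) (hG : G = LinearMap.id - Λ⁻¹ • A)
    (s t : ℕ) (hts : t < s) (m : ℕ) (v : V) :
    ⟪(A ^ s) ((G ^ m) v), (G ^ m) v⟫ ≤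
      Λ ^ (s - t) * (((s - t : ℕ) : ℝ) / (((s - t : ℕ) : ℝ) + 2 * m)) ^ (s - t) *
        ⟪(A ^ t) v, v⟫ := by
  classical
  set k := s - t with hkdef
  have hk : 0 < k := by omega
  have hst : s = t + k := by omega
  have hfr : Module.finrank ℝ V = Module.finrank ℝ V := rfl
  set e := hA.eigenvectorBasis hfr with he
  set μ := hA.eigenvalues hfr with hμ
  have heig : ∀ i, A (e i) = μ i • e i := fun i => hA.apply_eigenvectorBasis hfr i
  have hnorm : ∀ i, ⟪e i, e i⟫ = (1 : ℝ) := fun i => by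
    have h1 : ‖e i‖ = 1 := e.orthonormal.1 i
    rw [real_inner_self_eq_norm_sq, h1]; norm_num
  have hμ0 : ∀ i, 0 ≤ μ i := fun i => by
    have h := hA_pos (e i)
    rwa [heig, real_inner_smul_left, hnorm, mul_one] at h
  have hμΛ : ∀ i, μ i ≤ Λ := fun i => by
    have h := hΛ_ub (e i)
    rwa [heig, real_inner_smul_left, hnorm, mul_one, mul_one] at h
  have hApow : ∀ (j : ℕ) (i), (A ^ j) (e i) = (μ i ^ j) • e i := by
    intro j i
    induction j with
    | zero => simp
    | succ p ih =>
      rw [pow_succ, Module.End.mul_apply, heig, map_smul, ih, smul_smul, pow_succ]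
      ring_nf
  have hGe : ∀ i, G (e i) = (1 - Λ⁻¹ * μ i) • e i := by
    intro i
    rw [hG]
    simp only [LinearMap.sub_apply, LinearMap.id_apply, LinearMap.smul_apply, heig,
      smul_smul, sub_smul, one_smul]
  have hGpow : ∀ (j : ℕ) (i), (G ^ j) (e i) = ((1 - Λ⁻¹ * μ i) ^ j) • e i := by
    intro j i
    induction j with
    | zero => simp
    | succ p ih =>
      rw [pow_succ, Module.End.mul_apply, hGe, map_smul, ih, smul_smul, pow_succ]
      ring_nf
  set c : Fin (Module.finrank ℝ V) → ℝ := fun i => ⟪e i, v⟫ with hc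
  have hv : v = ∑ i, c i • e i := (e.sum_repr' v).symm
  have hGm : (G ^ m) v = ∑ i, (c i * (1 - Λ⁻¹ * μ i) ^ m) • e i := by
    conv_lhs => rw [hv]
    rw [map_sum]
    refine Finset.sum_congr rfl fun i _ => ?_
    rw [map_smul, hGpow, smul_smul, mul_comm]
  have hAGm : (A ^ s) ((G ^ m) v) = ∑ i, ((c i * (1 - Λ⁻¹ * μ i) ^ m) * μ i ^ s) • e i := by
    rw [hGm, map_sum]
    refine Finset.sum_congr rfl fun i _ => ?_
    rw [map_smul, hApow, smul_smul, mul_comm]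
  have hAt : (A ^ t) v = ∑ i, (c i * μ i ^ t) • e i := by
    conv_lhs => rw [hv]
    rw [map_sum]
    refine Finset.sum_congr rfl fun i _ => ?_
    rw [map_smul, hApow, smul_smul, mul_comm]
  have hLHS : ⟪(A ^ s) ((G ^ m) v), (G ^ m) v⟫
      = ∑ i, μ i ^ s * (1 - Λ⁻¹ * μ i) ^ (2 * m) * c i ^ 2 := by
    rw [hAGm, hGm, e.orthonormal.inner_sum]
    refine Finset.sum_congr rfl fun i _ => ?_
    simp only [starRingEnd_apply, star_trivial]
    ring
  have hRHS : ⟪(A ^ t) v, v⟫ = ∑ i, μ i ^ t * c i ^ 2 := by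
    conv_lhs => rw [hAt, show v = ∑ i, c i • e i from hv]
    rw [e.orthonormal.inner_sum]
    refine Finset.sum_congr rfl fun i _ => ?_
    simp only [starRingEnd_apply, star_trivial]
    ring
  rw [hLHS, hRHS, Finset.mul_sum]
  refine Finset.sum_le_sum fun i _ => ?_
  have hx0 : 0 ≤ Λ⁻¹ * μ i := mul_nonneg (inv_nonneg.2 hΛ.le) (hμ0 i)
  have hx1 : Λ⁻¹ * μ i ≤ 1 := by
    rw [inv_mul_le_iff₀ hΛ, mul_one]; exact hμΛ i
  have key := richardson_key_scalar k m hk hx0 hx1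
  have hmem : μ i ^ k = Λ ^ k * (Λ⁻¹ * μ i) ^ k := by
    rw [mul_pow, ← mul_assoc, ← mul_pow, mul_inv_cancel₀ hΛ.ne', one_pow, one_mul]
  have hnn : 0 ≤ Λ ^ k * (μ i ^ t * c i ^ 2) := by
    have := hμ0 i; positivity
  calc μ i ^ s * (1 - Λ⁻¹ * μ i) ^ (2 * m) * c i ^ 2
      = ((Λ⁻¹ * μ i) ^ k * (1 - Λ⁻¹ * μ i) ^ (2 * m)) * (Λ ^ k * (μ i ^ t * c i ^ 2)) := by
        rw [hst, pow_add, hmem]; ring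
    _ ≤ ((k : ℝ) / ((k : ℝ) + 2 * m)) ^ k * (Λ ^ k * (μ i ^ t * c i ^ 2)) :=
        mul_le_mul_of_nonneg_right key hnn
    _ = Λ ^ k * ((k : ℝ) / ((k : ℝ) + 2 * m)) ^ k * (μ i ^ t * c i ^ 2) := by ring
end

section
/- Let V be a finite-dimensional real inner product space, A : V → V a self-adjoint positive semidefinite linear operator, Λ > 0 with ⟨A v, v⟩ ≤ Λ ⟨v, v⟩ for all v ∈ V, and G = id − Λ⁻¹ A. Then for every m ∈ ℕ and every v ∈ V, ⟨A (G^m v), G^m v⟩ ≤ Λ (1 + 2m)⁻¹ ‖v‖². -/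
open scoped RealInnerProductSpace

/-- Scalar inequality: for `t ∈ [0,1]`, `t * (1-t)^(2m) ≤ (1+2m)⁻¹`. -/
lemma richardson_scalar (m : ℕ) (t : ℝ) (h0 : 0 ≤ t) (h1 : t ≤ 1) :
    t * (1 - t) ^ (2 * m) ≤ (1 + 2 * (m : ℝ))⁻¹ := by
  have hpos : (0 : ℝ) < 1 + 2 * m := by positivity
  have hb : 1 + (2 * m : ℝ) * t ≤ (1 + t) ^ (2 * m) := by
    have := one_add_mul_le_pow (a := t) (by linarith) (2 * m)
    calc 1 + (2 * m : ℝ) * t = 1 + (2 * m : ℕ) * t := by push_cast; ring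
      _ ≤ (1 + t) ^ (2 * m) := this
  have hden : (0 : ℝ) < 1 + 2 * m * t := by positivity
  have h2 : (1 - t) ^ (2 * m) ≤ (1 + 2 * m * t)⁻¹ := by
    have h3 : (1 - t) ≤ (1 + t)⁻¹ := by
      rw [inv_eq_one_div, le_div_iff₀ (by linarith : (0:ℝ) < 1 + t)]
      nlinarith
    calc (1 - t) ^ (2 * m) ≤ ((1 + t)⁻¹) ^ (2 * m) :=
          pow_le_pow_left₀ (by linarith) h3 _
      _ = ((1 + t) ^ (2 * m))⁻¹ := by rw [inv_pow]
      _ ≤ (1 + 2 * m * t)⁻¹ := by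
          apply inv_anti₀ hden; linarith
  have hfin : t / (1 + 2 * m * t) ≤ 1 / (1 + 2 * (m : ℝ)) := by
    rw [div_le_div_iff₀ hden hpos]; nlinarith
  calc t * (1 - t) ^ (2 * m) ≤ t * (1 + 2 * m * t)⁻¹ :=
        mul_le_mul_of_nonneg_left h2 h0
    _ ≤ (1 + 2 * (m : ℝ))⁻¹ := by
        rw [← div_eq_mul_inv, inv_eq_one_div]; exact hfin

/-- Smoothing property (case `s = 1`, `t = 0`): if `A` is a self-adjoint positive semidefinite
operator on a finite-dimensional real inner product space, `Λ > 0` with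
`⟪A v, v⟫ ≤ Λ ⟪v, v⟫` for all `v`, and `G = id - Λ⁻¹ • A`, then
`⟪A (G^m v), G^m v⟫ ≤ Λ (1 + 2m)⁻¹ ‖v‖²` for every `m` and `v`. -/
theorem richardson_smoothing_one_zero
    {V : Type*} [NormedAddCommGroup V] [InnerProductSpace ℝ V] [FiniteDimensional ℝ V]
    (A : V →ₗ[ℝ] V) (hA : LinearMap.IsSymmetric A)
    (hA_pos : ∀ v : V, 0 ≤ ⟪A v, v⟫)
    (Λ : ℝ) (hΛ : 0 < Λ) (hΛ_ub : ∀ v : V, ⟪A v, v⟫ ≤ Λ * ⟪v, v⟫)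
    (G : V →ₗ[ℝ] V) (hG : G = LinearMap.id - Λ⁻¹ • A)
    (m : ℕ) (v : V) :
    ⟪A ((G ^ m) v), (G ^ m) v⟫ ≤ Λ * (1 + 2 * (m : ℝ))⁻¹ * ‖v‖ ^ 2 := by
  classical
  set n := Module.finrank ℝ V with hn
  have hfr : Module.finrank ℝ V = n := rfl
  set b := hA.eigenvectorBasis hfr with hb
  set lam := hA.eigenvalues hfr with hlam
  -- eigenvalue bounds
  have hlam_nonneg : ∀ i, 0 ≤ lam i := by
    intro i
    have h := hA_pos (b i)
    rw [hA.apply_eigenvectorBasis hfr i] at h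
    simpa [← hb, ← hlam, real_inner_smul_left, real_inner_self_eq_norm_sq, b.orthonormal.1 i] using h
  have hlam_le : ∀ i, lam i ≤ Λ := by
    intro i
    have h := hΛ_ub (b i)
    rw [hA.apply_eigenvectorBasis hfr i] at h
    simpa [← hb, ← hlam, real_inner_smul_left, real_inner_self_eq_norm_sq, b.orthonormal.1 i] using h
  -- repr of A and G in coordinates
  have hreprA : ∀ (x : V) (i : Fin n), b.repr (A x) i = lam i * b.repr x i := fun x i =>
    hA.eigenvectorBasis_apply_self_apply hfr x i
  have hreprG : ∀ (x : V) (i : Fin n), b.repr (G x) i = (1 - lam i / Λ) * b.repr x i := by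
    intro x i
    rw [hG]
    simp only [LinearMap.sub_apply, LinearMap.id_apply, LinearMap.smul_apply, map_sub, map_smul]
    rw [PiLp.sub_apply, PiLp.smul_apply, hreprA]
    simp [smul_eq_mul]
    ring
  have hreprGm : ∀ (k : ℕ) (w : V) (i : Fin n),
      b.repr ((G ^ k) w) i = (1 - lam i / Λ) ^ k * b.repr w i := by
    intro k
    induction k with
    | zero => intro w i; simp
    | succ l ihl =>
        intro w i
        rw [pow_succ', Module.End.mul_apply, hreprG, ihl, pow_succ]
        ring
  -- inner products in coordinates
  have hinner : ∀ x y : V, ⟪x, y⟫ = ∑ i, b.repr x i * b.repr y i := by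
    intro x y
    rw [← b.repr.inner_map_map x y]
    simp only [PiLp.inner_apply, RCLike.inner_apply, starRingEnd_apply, star_trivial]
    exact Finset.sum_congr rfl fun i _ => mul_comm _ _
  set c : Fin n → ℝ := fun i => b.repr v i with hc
  have hnorm : ‖v‖ ^ 2 = ∑ i, c i ^ 2 := by
    rw [← real_inner_self_eq_norm_sq, hinner]
    simp [hc, sq]
  have key : ⟪A ((G ^ m) v), (G ^ m) v⟫
      = ∑ i, lam i * (1 - lam i / Λ) ^ (2 * m) * c i ^ 2 := by
    rw [hinner]
    apply Finset.sum_congr rfl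
    intro i _
    rw [hreprA, hreprGm m v i]
    rw [two_mul, pow_add]
    ring
  rw [key, hnorm, Finset.mul_sum]
  apply Finset.sum_le_sum
  intro i _
  have ht0 : 0 ≤ lam i / Λ := div_nonneg (hlam_nonneg i) hΛ.le
  have ht1 : lam i / Λ ≤ 1 := (div_le_one hΛ).mpr (hlam_le i)
  have hs := richardson_scalar m (lam i / Λ) ht0 ht1
  have : lam i * (1 - lam i / Λ) ^ (2 * m) ≤ Λ * (1 + 2 * (m : ℝ))⁻¹ := by
    have := mul_le_mul_of_nonneg_left hs hΛ.le
    calc lam i * (1 - lam i / Λ) ^ (2 * m)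
        = Λ * (lam i / Λ * (1 - lam i / Λ) ^ (2 * m)) := by
          rw [← mul_assoc, mul_comm Λ (lam i / Λ), div_mul_cancel₀ _ hΛ.ne']
      _ ≤ Λ * (1 + 2 * (m : ℝ))⁻¹ := this
  have hci : (0 : ℝ) ≤ c i ^ 2 := sq_nonneg _
  calc lam i * (1 - lam i / Λ) ^ (2 * m) * c i ^ 2
      ≤ Λ * (1 + 2 * (m : ℝ))⁻¹ * c i ^ 2 := mul_le_mul_of_nonneg_right this hci
end

section
/- Let V be a finite-dimensional real inner product space, A : V → V a self-adjoint positive semidefinite linear operator, Λ > 0 with ⟨A v, v⟩ ≤ Λ ⟨v, v⟩ for all v ∈ V, and G = id − Λ⁻¹ A. Then for every m ∈ ℕ and every v ∈ V, ‖A (G^m v)‖² ≤ Λ (1 + 2m)⁻¹ ⟨A v, v⟩. -/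
open scoped RealInnerProductSpace

private lemma aux_scalar (m : ℕ) {x : ℝ} (hx0 : 0 ≤ x) (hx1 : x ≤ 1) :
    (1 + 2 * (m : ℝ)) * (x * (1 - x) ^ (2 * m)) ≤ 1 := by
  have hy0 : (0:ℝ) ≤ (1 - x) ^ (2 * m) := (even_two_mul m).pow_nonneg _
  have hber : 1 + (2 * m : ℕ) * x ≤ (1 + x) ^ (2 * m) :=
    one_add_mul_le_pow (by linarith) (2 * m)
  push_cast at hber
  have h1 : (1 + 2 * (m:ℝ) * x) * (1 - x) ^ (2 * m) ≤ (1 - x ^ 2) ^ (2 * m) := by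
    calc (1 + 2 * (m:ℝ) * x) * (1 - x) ^ (2 * m)
        ≤ (1 + x) ^ (2 * m) * (1 - x) ^ (2 * m) :=
          mul_le_mul_of_nonneg_right hber hy0
      _ = (1 - x ^ 2) ^ (2 * m) := by rw [← mul_pow]; ring_nf
  have h2 : (1 - x ^ 2) ^ (2 * m) ≤ 1 :=
    pow_le_one₀ (by nlinarith) (by nlinarith)
  have h3 : (1 + 2 * (m:ℝ)) * x ≤ 1 + 2 * (m:ℝ) * x := by
    have : (0:ℝ) ≤ (m:ℝ) := Nat.cast_nonneg m
    nlinarith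
  calc (1 + 2 * (m:ℝ)) * (x * (1 - x) ^ (2 * m))
      = ((1 + 2 * (m:ℝ)) * x) * (1 - x) ^ (2 * m) := by ring
    _ ≤ (1 + 2 * (m:ℝ) * x) * (1 - x) ^ (2 * m) :=
        mul_le_mul_of_nonneg_right h3 hy0
    _ ≤ 1 := h1.trans h2

/-- Smoothing property (case `s = 2`, `t = 1`): if `A` is a self-adjoint positive semidefinite
operator on a finite-dimensional real inner product space, `Λ > 0` with
`⟪A v, v⟫ ≤ Λ ⟪v, v⟫` for all `v`, and `G = id - Λ⁻¹ • A`, then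
`‖A (G^m v)‖² ≤ Λ (1 + 2m)⁻¹ ⟪A v, v⟫` for every `m` and `v`. -/
theorem richardson_smoothing_two_one
    {V : Type*} [NormedAddCommGroup V] [InnerProductSpace ℝ V] [FiniteDimensional ℝ V]
    (A : V →ₗ[ℝ] V) (hA : LinearMap.IsSymmetric A)
    (hA_pos : ∀ v : V, 0 ≤ ⟪A v, v⟫)
    (Λ : ℝ) (hΛ : 0 < Λ) (hΛ_ub : ∀ v : V, ⟪A v, v⟫ ≤ Λ * ⟪v, v⟫)
    (G : V →ₗ[ℝ] V) (hG : G = LinearMap.id - Λ⁻¹ • A)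
    (m : ℕ) (v : V) :
    ‖A ((G ^ m) v)‖ ^ 2 ≤ Λ * (1 + 2 * (m : ℝ))⁻¹ * ⟪A v, v⟫ := by
  classical
  set n := Module.finrank ℝ V with hn
  let b : OrthonormalBasis (Fin n) ℝ V := hA.eigenvectorBasis rfl
  let μ : Fin n → ℝ := hA.eigenvalues rfl
  have hrepA : ∀ (w : V) (i : Fin n), b.repr (A w) i = μ i * b.repr w i := fun w i =>
    hA.eigenvectorBasis_apply_self_apply rfl w i
  have hμ0 : ∀ i, 0 ≤ μ i := by
    intro i
    have := hA_pos (b i)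
    rw [hA.apply_eigenvectorBasis rfl i, real_inner_smul_left,
      real_inner_self_eq_norm_sq, b.orthonormal.1 i] at this
    simpa using this
  have hμΛ : ∀ i, μ i ≤ Λ := by
    intro i
    have := hΛ_ub (b i)
    rw [hA.apply_eigenvectorBasis rfl i, real_inner_smul_left,
      real_inner_self_eq_norm_sq, b.orthonormal.1 i] at this
    simpa using this
  have hrepG : ∀ (w : V) (i : Fin n), b.repr (G w) i = (1 - μ i / Λ) * b.repr w i := by
    intro w i
    rw [hG]
    simp only [LinearMap.sub_apply, LinearMap.id_apply, LinearMap.smul_apply, map_sub, map_smul]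
    simp only [PiLp.sub_apply, PiLp.smul_apply, smul_eq_mul, hrepA w i]
    field_simp
  have hrepGm : ∀ (i : Fin n), b.repr ((G ^ m) v) i = (1 - μ i / Λ) ^ m * b.repr v i := by
    intro i
    induction m with
    | zero => simp
    | succ k ih =>
      rw [pow_succ', Module.End.mul_apply, hrepG, ih]
      ring
  set c : Fin n → ℝ := fun i => b.repr v i with hc
  have hAvv : ⟪A v, v⟫ = ∑ i, μ i * c i ^ 2 := by
    rw [← b.sum_inner_mul_inner (A v) v]
    refine Finset.sum_congr rfl fun i _ => ?_
    have e1 : ⟪A v, b i⟫ = μ i * c i := by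
      rw [real_inner_comm, ← b.repr_apply_apply (A v) i, hrepA]
    have e2 : ⟪b i, v⟫ = c i := (b.repr_apply_apply v i).symm
    rw [e1, e2]; ring
  have hnorm : ‖A ((G ^ m) v)‖ ^ 2 = ∑ i, (μ i * (1 - μ i / Λ) ^ m * c i) ^ 2 := by
    rw [← real_inner_self_eq_norm_sq, ← b.sum_inner_mul_inner]
    refine Finset.sum_congr rfl fun i _ => ?_
    have e1 : ⟪A ((G ^ m) v), b i⟫ = μ i * ((1 - μ i / Λ) ^ m * c i) := by
      rw [real_inner_comm, ← b.repr_apply_apply (A ((G ^ m) v)) i, hrepA, hrepGm]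
    have e2 : ⟪b i, A ((G ^ m) v)⟫ = μ i * ((1 - μ i / Λ) ^ m * c i) := by
      rw [← b.repr_apply_apply (A ((G ^ m) v)) i, hrepA, hrepGm]
    rw [e1, e2]; ring
  rw [hnorm, hAvv, Finset.mul_sum]
  refine Finset.sum_le_sum fun i _ => ?_
  have hm1 : (0:ℝ) < 1 + 2 * (m:ℝ) := by positivity
  set x : ℝ := μ i / Λ with hxdef
  have hx0 : 0 ≤ x := div_nonneg (hμ0 i) hΛ.le
  have hx1 : x ≤ 1 := (div_le_one hΛ).mpr (hμΛ i)
  have key2 : (1 + 2 * (m:ℝ)) * (x * ((1 - x) ^ m) ^ 2) ≤ 1 := by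
    have := aux_scalar m hx0 hx1
    rwa [mul_comm 2 m, pow_mul] at this
  have hμx : Λ * x = μ i := by rw [hxdef]; field_simp
  have h4 : (1 + 2 * (m:ℝ)) * (μ i ^ 2 * ((1 - x) ^ m) ^ 2) ≤ Λ * μ i := by
    calc (1 + 2 * (m:ℝ)) * (μ i ^ 2 * ((1 - x) ^ m) ^ 2)
        = Λ * μ i * ((1 + 2 * (m:ℝ)) * (x * ((1 - x) ^ m) ^ 2)) := by
          rw [← hμx]; ring
      _ ≤ Λ * μ i * 1 := by
          apply mul_le_mul_of_nonneg_left key2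
          exact mul_nonneg hΛ.le (hμ0 i)
      _ = Λ * μ i := mul_one _
  have key : μ i ^ 2 * ((1 - x) ^ m) ^ 2 ≤ Λ * (1 + 2 * (m:ℝ))⁻¹ * μ i := by
    rw [show Λ * (1 + 2 * (m:ℝ))⁻¹ * μ i = Λ * μ i / (1 + 2 * (m:ℝ)) by ring,
      le_div_iff₀ hm1]
    linarith
  calc (μ i * (1 - x) ^ m * c i) ^ 2
      = (μ i ^ 2 * ((1 - x) ^ m) ^ 2) * c i ^ 2 := by ring
    _ ≤ (Λ * (1 + 2 * (m:ℝ))⁻¹ * μ i) * c i ^ 2 :=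
        mul_le_mul_of_nonneg_right key (sq_nonneg _)
    _ = Λ * (1 + 2 * (m:ℝ))⁻¹ * (μ i * c i ^ 2) := by ring
end
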